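/- Monotone decrease of ECE under the mean-matching constraint in a symmetric model: suppose the true conditional probability satisfies P(y=1 | ŵᵀx = ξ) = g(ξ) where g : R → (0,1) is strictly increasing with g(−ξ) = 1 − g(ξ), and (ŵᵀx) ~ N(0, q). Then the rescaled predictor ξ ↦ σ(ξ/T) is perfectly calibrated (Δ_ℓ = 0 for all ℓ) if and only if σ(ξ/T) = g(ξ) for a.e. ξ, and when such T exists the expectation consistency condition E[max(σ(ξ/T), 1−σ(ξ/T))] = accuracy is satisfied at that T. -/

import Mathlib

open MeasureTheory ProbabilityTheory

/-- The logistic sigmoid. -/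
noncomputable def sigmoid (t : ℝ) : ℝ := 1 / (1 + Real.exp (-t))

lemma sigmoid_mem_Ioo (t : ℝ) : sigmoid t ∈ Set.Ioo (0:ℝ) 1 := by
  have h := Real.exp_pos (-t)
  constructor
  · unfold sigmoid; positivity
  · unfold sigmoid
    rw [div_lt_one (by linarith)]
    linarith

lemma log_sigmoid_ratio (t : ℝ) : Real.log (sigmoid t / (1 - sigmoid t)) = t := by
  have h := Real.exp_pos (-t)
  have h1 : (1:ℝ) + Real.exp (-t) ≠ 0 := by positivity
  have h2 : 1 - sigmoid t = Real.exp (-t) / (1 + Real.exp (-t)) := by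
    unfold sigmoid; field_simp; ring
  have h3 : sigmoid t / (1 - sigmoid t) = Real.exp t := by
    rw [h2]; unfold sigmoid
    rw [Real.exp_neg]
    field_simp
  rw [h3, Real.log_exp]

lemma sigmoid_log (ℓ : ℝ) (hℓ : ℓ ∈ Set.Ioo (0:ℝ) 1) :
    sigmoid (Real.log (ℓ / (1 - ℓ))) = ℓ := by
  obtain ⟨h0, h1⟩ := hℓ
  have hpos : 0 < ℓ / (1 - ℓ) := div_pos h0 (by linarith)
  unfold sigmoid
  rw [← Real.log_inv, Real.exp_log (by positivity)]
  rw [inv_div]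
  field_simp
  ring

lemma sigmoid_strictMono : StrictMono sigmoid := by
  intro a b hab
  have h := Real.exp_pos (-a)
  have h' := Real.exp_pos (-b)
  have : Real.exp (-b) < Real.exp (-a) := Real.exp_lt_exp.2 (by linarith)
  unfold sigmoid
  rw [div_lt_div_iff₀ (by linarith) (by linarith)]
  linarith

lemma sigmoid_continuous : Continuous sigmoid := by
  unfold sigmoid
  apply Continuous.div continuous_const
  · continuity
  · intro t; have := Real.exp_pos (-t); positivity

/-- In a symmetric model where `P(y=1 | ŵᵀx = ξ) = g(ξ)` with `g` strictly
increasing, `g(−ξ) = 1 − g(ξ)`, values in `(0,1)`, and `ŵᵀx ~ N(0,q)`: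
the `T`-rescaled predictor `ξ ↦ σ(ξ/T)` is perfectly calibrated
(`Δ_ℓ = ℓ − g(T σ⁻¹(ℓ)) = 0` for all `ℓ ∈ (0,1)`) if and only if
`σ(ξ/T) = g(ξ)` for a.e. `ξ`; and when such `T` exists, the expectation
consistency condition (average confidence = accuracy
`E_{ξ~N(0,q)}[max(g(ξ), 1−g(ξ))]`) holds at that `T`. -/
theorem stmt15 (g : ℝ → ℝ) (hg : StrictMono g) (hg01 : ∀ ξ, g ξ ∈ Set.Ioo (0:ℝ) 1)
    (hsym : ∀ ξ, g (-ξ) = 1 - g ξ) (q : ℝ) (hq : 0 < q) (T : ℝ) (hT : 0 < T) :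
    ((∀ ℓ ∈ Set.Ioo (0:ℝ) 1, ℓ - g (T * Real.log (ℓ / (1 - ℓ))) = 0) ↔
        ∀ᵐ ξ ∂(volume : Measure ℝ), sigmoid (ξ / T) = g ξ) ∧
    ((∀ ℓ ∈ Set.Ioo (0:ℝ) 1, ℓ - g (T * Real.log (ℓ / (1 - ℓ))) = 0) →
      ∫ ξ, max (sigmoid (ξ / T)) (1 - sigmoid (ξ / T)) ∂gaussianReal 0 q.toNNReal =
        ∫ ξ, max (g ξ) (1 - g ξ) ∂gaussianReal 0 q.toNNReal) := by
  -- Forward: calibration implies pointwise equality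
  have fwd : (∀ ℓ ∈ Set.Ioo (0:ℝ) 1, ℓ - g (T * Real.log (ℓ / (1 - ℓ))) = 0) →
      ∀ ξ, sigmoid (ξ / T) = g ξ := by
    intro cal ξ
    have h := cal (sigmoid (ξ / T)) (sigmoid_mem_Ioo _)
    rw [log_sigmoid_ratio, mul_div_cancel₀ _ hT.ne'] at h
    linarith
  constructor
  · constructor
    · intro cal
      filter_upwards with ξ using fwd cal ξ
    · -- a.e. equality implies calibration
      intro hae ℓ hℓ
      -- first: a.e. equality + monotonicity gives pointwise equality
      have hpt : ∀ ξ, sigmoid (ξ / T) = g ξ := by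
        intro ξ
        have hS : volume {x : ℝ | ¬ sigmoid (x / T) = g x} = 0 := hae
        -- get points of equality arbitrarily close to ξ from above and below
        have key : ∀ a b : ℝ, a < b → ∃ x ∈ Set.Ioo a b, sigmoid (x / T) = g x := by
          intro a b hab
          by_contra hcon
          push_neg at hcon
          have hsub : Set.Ioo a b ⊆ {x : ℝ | ¬ sigmoid (x / T) = g x} := by
            intro x hx; exact hcon x hx
          have := measure_mono_null hsub hS
          rw [Real.volume_Ioo] at this
          have : (0:ℝ) < b - a := by linarith
          simp_all [ENNReal.ofReal_eq_zero]
          linarith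
        have hseq : ∀ n : ℕ, ∃ x, x ∈ Set.Ioo ξ (ξ + 1/(n+1)) ∧ sigmoid (x / T) = g x := by
          intro n
          have : ξ < ξ + 1/(n+1) := by
            have : (0:ℝ) < 1/(n+1) := by positivity
            linarith
          obtain ⟨x, hx, he⟩ := key ξ (ξ + 1/(n+1)) this
          exact ⟨x, hx, he⟩
        have hseq' : ∀ n : ℕ, ∃ x, x ∈ Set.Ioo (ξ - 1/(n+1)) ξ ∧ sigmoid (x / T) = g x := by
          intro n
          have : ξ - 1/(n+1) < ξ := by
            have : (0:ℝ) < 1/(n+1) := by positivity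
            linarith
          obtain ⟨x, hx, he⟩ := key (ξ - 1/(n+1)) ξ this
          exact ⟨x, hx, he⟩
        choose u hu heu using hseq
        choose v hv hev using hseq'
        have hulim : Filter.Tendsto u Filter.atTop (nhds ξ) := by
          have h1 : Filter.Tendsto (fun n : ℕ => ξ + 1/((n:ℝ)+1)) Filter.atTop (nhds ξ) := by
            have : Filter.Tendsto (fun n : ℕ => 1 / ((n:ℝ) + 1)) Filter.atTop (nhds 0) := tendsto_one_div_add_atTop_nhds_zero_nat
            have h2 := Filter.Tendsto.const_add ξ this
            simpa using h2
          exact tendsto_of_tendsto_of_tendsto_of_le_of_le tendsto_const_nhds h1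
            (fun n => (hu n).1.le) (fun n => (hu n).2.le)
        have hvlim : Filter.Tendsto v Filter.atTop (nhds ξ) := by
          have h1 : Filter.Tendsto (fun n : ℕ => ξ - 1/((n:ℝ)+1)) Filter.atTop (nhds ξ) := by
            have : Filter.Tendsto (fun n : ℕ => 1 / ((n:ℝ) + 1)) Filter.atTop (nhds 0) := tendsto_one_div_add_atTop_nhds_zero_nat
            have h2 := Filter.Tendsto.const_sub ξ this
            simpa using h2
          exact tendsto_of_tendsto_of_tendsto_of_le_of_le h1 tendsto_const_nhds
            (fun n => (hv n).1.le) (fun n => (hv n).2.le)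
        have hsu : Filter.Tendsto (fun n => sigmoid (u n / T)) Filter.atTop (nhds (sigmoid (ξ / T))) :=
          (sigmoid_continuous.tendsto _).comp (hulim.div_const T)
        have hsv : Filter.Tendsto (fun n => sigmoid (v n / T)) Filter.atTop (nhds (sigmoid (ξ / T))) :=
          (sigmoid_continuous.tendsto _).comp (hvlim.div_const T)
        have hle : g ξ ≤ sigmoid (ξ / T) := by
          apply ge_of_tendsto hsu
          filter_upwards with n
          rw [heu n]
          exact (hg (hu n).1).le
        have hge : sigmoid (ξ / T) ≤ g ξ := by
          apply le_of_tendsto hsv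
          filter_upwards with n
          rw [hev n]
          exact (hg (hv n).2).le
        linarith
      set ξ := T * Real.log (ℓ / (1 - ℓ)) with hξ
      have h1 : ξ / T = Real.log (ℓ / (1 - ℓ)) := by
        rw [hξ, mul_div_assoc]
        field_simp
      have := hpt ξ
      rw [h1, sigmoid_log ℓ hℓ] at this
      linarith
  · intro cal
    have hpt := fwd cal
    apply integral_congr_ae
    filter_upwards with ξ
    rw [hpt ξ]
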